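/- arXiv:math/9805031 — 5 statements merged into one kernel-verified Lean document; each statement's English description precedes it below -/
import Mathlib

section
/- Let γ : ℝ≥0 → ℝ² be a C¹ curve such that (i) |γ(t)| → ∞ as t → ∞, (ii) γ(t)/|γ(t)| → (0,1) as t → ∞, (iii) |γ'(t)| = 1 for all t, and (iv) |γ'(t) − γ(t)/|γ(t)|| ≤ 2k/|γ(t)| for all t, where k > 0 is a constant. Then the first coordinate of γ satisfies |γ₁(t)| < 4k for all t ≥ 0. -/
open Filter Set

lemma euclid_abs_apply_le_norm (v : EuclideanSpace ℝ (Fin 2)) (i : Fin 2) :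
    |v i| ≤ ‖v‖ := by
  rw [EuclideanSpace.norm_eq]
  have h1 : |v i| = Real.sqrt (‖v i‖ ^ 2) := by
    rw [Real.norm_eq_abs, Real.sqrt_sq_eq_abs, abs_abs]
  rw [h1]
  apply Real.sqrt_le_sqrt
  exact Finset.single_le_sum (fun j _ => sq_nonneg ‖v j‖) (Finset.mem_univ i)

lemma core_lemma (k : ℝ) (hk : 0 < k) (f f' n : ℝ → ℝ) (t₀ : ℝ)
    (hd : ∀ t ≥ t₀, HasDerivAt f (f' t) t)
    (hfn : ∀ t ≥ t₀, |f t| ≤ n t)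
    (hngrow : ∀ t ≥ t₀, n t ≤ n t₀ + (t - t₀))
    (hf' : ∀ t ≥ t₀, 0 < n t → (f t - 2 * k) / n t ≤ f' t)
    (hf0 : 4 * k ≤ f t₀)
    (hratio : Tendsto (fun t => f t / n t) atTop (nhds 0)) : False := by
  set C : ℝ := n t₀ - t₀ + 1 with hC
  have hn0 : 0 < n t₀ := lt_of_lt_of_le (by linarith) ((le_abs_self _).trans (hfn t₀ le_rfl))
  have htC : 0 < t₀ + C := by rw [hC]; linarith
  have hnlt : ∀ t ≥ t₀, n t < t + C := by
    intro t ht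
    have := hngrow t ht
    rw [hC]; linarith
  set ε : ℝ := (f t₀ - 2 * k) / (t₀ + C) with hε
  have hεpos : 0 < ε := div_pos (by linarith) htC
  have key : ∀ t ≥ t₀, 2 * k + ε * (t + C) ≤ f t := by
    intro b hb
    have main := image_le_of_deriv_right_lt_deriv_boundary
      (f := fun t => -f t) (f' := fun t => -f' t) (a := t₀) (b := b)
      (B := fun t => -(2 * k + ε * (t + C))) (B' := fun _ => -ε)
      (fun x hx => ((hd x hx.1).continuousAt.continuousWithinAt).neg)
      (fun x hx => ((hd x hx.1).hasDerivWithinAt.neg))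
      (by
        have : ε * (t₀ + C) = f t₀ - 2 * k := div_mul_cancel₀ _ (ne_of_gt htC)
        simp only [neg_le_neg_iff]; linarith)
      (fun x => by
        have h1 : HasDerivAt (fun t : ℝ => 2 * k + ε * (t + C)) ε x := by
          simpa using (((hasDerivAt_id x).add_const C).const_mul ε).const_add (2 * k)
        exact h1.neg)
      (by
        intro x hx heq
        have hxt : t₀ ≤ x := hx.1
        have hxC : 0 < x + C := lt_of_lt_of_le htC (by linarith)
        have hfx : f x = 2 * k + ε * (x + C) := neg_inj.mp heq
        have hfx' : f x - 2 * k = ε * (x + C) := by linarith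
        have hpos : 0 < f x - 2 * k := by
          rw [hfx']; positivity
        have hnx : 0 < n x := lt_of_lt_of_le (by linarith) ((le_abs_self _).trans (hfn x hxt))
        have h2 : (f x - 2 * k) / (x + C) < (f x - 2 * k) / n x :=
          div_lt_div_of_pos_left hpos hnx (hnlt x hxt)
        have h3 : (f x - 2 * k) / (x + C) = ε := by
          rw [hfx']; field_simp
        have h4 := hf' x hxt hnx
        simp only [neg_lt_neg_iff]
        linarith)
    have := main (Set.right_mem_Icc.2 hb)
    simp only [neg_le_neg_iff] at this
    linarith
  have hev : ∀ᶠ t in atTop, f t / n t < ε := hratio.eventually_lt_const hεpos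
  obtain ⟨t, hlt, ht⟩ := (hev.and (eventually_ge_atTop t₀)).exists
  have h1 := key t ht
  have htC' : 0 < t + C := lt_of_lt_of_le htC (by linarith)
  have hft : 0 < f t := by nlinarith
  have hnt : 0 < n t := lt_of_lt_of_le hft ((le_abs_self _).trans (hfn t ht))
  have h2 : f t / (t + C) ≤ f t / n t :=
    div_le_div_of_nonneg_left hft.le hnt (hnlt t ht).le |>.trans le_rfl
  have h3 : ε < f t / (t + C) := by
    rw [lt_div_iff₀ htC']
    nlinarith
  linarith

/-- A unit-speed C¹ curve in the plane that tends to infinity in the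
vertical direction `(0,1)` and whose derivative is within `2k/|γ(t)|` of the radial
direction has first coordinate bounded in absolute value by `4k`. -/
theorem planar_curve_first_coordinate_bound
    (k : ℝ) (hk : 0 < k)
    (γ γ' : ℝ → EuclideanSpace ℝ (Fin 2))
    (hderiv : ∀ t ≥ (0 : ℝ), HasDerivAt γ (γ' t) t)
    (hC1 : ContinuousOn γ' (Set.Ici 0))
    (hinfty : Tendsto (fun t => ‖γ t‖) atTop atTop)
    (y : EuclideanSpace ℝ (Fin 2)) (hy0 : y 0 = 0) (hy1 : y 1 = 1)
    (hdir : Tendsto (fun t => ‖γ t‖⁻¹ • γ t) atTop (nhds y))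
    (hunit : ∀ t ≥ (0 : ℝ), ‖γ' t‖ = 1)
    (hradial : ∀ t ≥ (0 : ℝ), ‖γ' t - ‖γ t‖⁻¹ • γ t‖ ≤ 2 * k / ‖γ t‖) :
    ∀ t ≥ (0 : ℝ), |γ t 0| < 4 * k := by
  intro t₀ ht₀
  by_contra hcon
  push_neg at hcon
  -- derivative of the first coordinate
  have hc : ∀ t ≥ (0:ℝ), HasDerivAt (fun s => γ s 0) (γ' t 0) t := by
    intro t ht
    have := (EuclideanSpace.proj (0 : Fin 2)).hasFDerivAt.comp_hasDerivAt t (hderiv t ht)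
    exact this
  -- norm growth
  have hngrow : ∀ t ≥ t₀, ‖γ t‖ ≤ ‖γ t₀‖ + (t - t₀) := by
    intro t ht
    have hseg := norm_image_sub_le_of_norm_deriv_le_segment'
      (f := γ) (f' := γ') (a := t₀) (b := t) (C := 1)
      (fun x hx => ((hderiv x (le_trans ht₀ hx.1)).hasDerivWithinAt))
      (fun x hx => le_of_eq (hunit x (le_trans ht₀ hx.1)))
      t (Set.right_mem_Icc.2 ht)
    calc ‖γ t‖ ≤ ‖γ t₀‖ + ‖γ t - γ t₀‖ := by
          have := norm_sub_norm_le (γ t) (γ t₀); linarith [abs_le.mp (abs_norm_sub_norm_le (γ t) (γ t₀))]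
      _ ≤ ‖γ t₀‖ + 1 * (t - t₀) := by linarith
      _ = ‖γ t₀‖ + (t - t₀) := by ring
  -- radial estimate on coordinate
  have hrad1 : ∀ t ≥ t₀, |γ' t 0 - ‖γ t‖⁻¹ * γ t 0| ≤ 2 * k / ‖γ t‖ := by
    intro t ht
    have h1 : |(γ' t - ‖γ t‖⁻¹ • γ t) 0| ≤ ‖γ' t - ‖γ t‖⁻¹ • γ t‖ :=
      euclid_abs_apply_le_norm _ 0
    have h2 : (γ' t - ‖γ t‖⁻¹ • γ t) 0 = γ' t 0 - ‖γ t‖⁻¹ * γ t 0 := rfl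
    rw [h2] at h1
    exact h1.trans (hradial t (le_trans ht₀ ht))
  -- ratio tendsto
  have hratio0 : Tendsto (fun t => γ t 0 / ‖γ t‖) atTop (nhds 0) := by
    have h := ((EuclideanSpace.proj (0 : Fin 2)).continuous.tendsto y).comp hdir
    have h2 := h.congr (fun t => by
      show (‖γ t‖⁻¹ • γ t) 0 = γ t 0 / ‖γ t‖
      show ‖γ t‖⁻¹ * γ t 0 = _
      rw [inv_mul_eq_div])
    have h3 : (EuclideanSpace.proj (0 : Fin 2)) y = 0 := hy0
    rwa [h3] at h2
  rcases le_abs.mp hcon with hpos | hneg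
  · -- positive case
    refine core_lemma k hk (fun t => γ t 0) (fun t => γ' t 0) (fun t => ‖γ t‖) t₀
      (fun t ht => hc t (le_trans ht₀ ht))
      (fun t ht => euclid_abs_apply_le_norm (γ t) 0)
      hngrow ?_ hpos hratio0
    intro t ht hn
    have h1 := abs_le.mp (hrad1 t ht)
    have : (γ t 0 - 2 * k) / ‖γ t‖ = ‖γ t‖⁻¹ * γ t 0 - 2 * k / ‖γ t‖ := by
      rw [sub_div, inv_mul_eq_div]
    rw [this]
    linarith [h1.1]
  · -- negative case
    refine core_lemma k hk (fun t => -(γ t 0)) (fun t => -(γ' t 0)) (fun t => ‖γ t‖) t₀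
      (fun t ht => (hc t (le_trans ht₀ ht)).neg)
      (fun t ht => by rw [abs_neg]; exact euclid_abs_apply_le_norm (γ t) 0)
      hngrow ?_ hneg ?_
    · intro t ht hn
      have h1 := abs_le.mp (hrad1 t ht)
      have : (-(γ t 0) - 2 * k) / ‖γ t‖ = -(‖γ t‖⁻¹ * γ t 0) - 2 * k / ‖γ t‖ := by
        rw [sub_div, inv_mul_eq_div, neg_div]
      rw [this]
      linarith [h1.2]
    · have := hratio0.neg
      simpa [neg_div] using this
end

section
/- The hyperbola X = {(x,y) ∈ ℂ² : xy = 1} is transverse to infinity: there exists a constant k > 0 such that for every point p ∈ X, the angle between the vector p and the tangent line T_p X satisfies ∠(p, T_p X) < k/‖p‖. -/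
open scoped ComplexOrder

/-- The angle between two vectors in a complex Hermitian space,
`arccos (|⟨p,v⟩| / (‖p‖‖v‖))`. -/
noncomputable def vecAngle (p v : EuclideanSpace ℂ (Fin 2)) : ℝ :=
  Real.arccos (‖(inner ℂ p v : ℂ)‖ / (‖p‖ * ‖v‖))

/-- The hyperbola `{(x,y) : xy = 1} ⊂ ℂ²` is transverse to infinity:
there is `k > 0` such that for every point `p` of the hyperbola, the angle between `p`
and its tangent line `T_p X = {v : p₂ v₁ + p₁ v₂ = 0}` (the infimum of the angles between
`p` and nonzero tangent vectors) is less than `k / ‖p‖`. -/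
theorem hyperbola_transverse_to_infinity :
    ∃ k : ℝ, 0 < k ∧ ∀ p : EuclideanSpace ℂ (Fin 2), p 0 * p 1 = 1 →
      sInf {a : ℝ | ∃ v : EuclideanSpace ℂ (Fin 2),
          p 1 * v 0 + p 0 * v 1 = 0 ∧ v ≠ 0 ∧ a = vecAngle p v} < k / ‖p‖ := by
  refine ⟨Real.pi, Real.pi_pos, ?_⟩
  intro p hp
  set x := p 0 with hxdef
  set y := p 1 with hydef
  have hx : x ≠ 0 := left_ne_zero_of_mul_eq_one hp
  set v : EuclideanSpace ℂ (Fin 2) := (WithLp.equiv 2 (Fin 2 → ℂ)).symm ![x, -y] with hvdef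
  have hv0 : v 0 = x := rfl
  have hv1 : v 1 = -y := rfl
  have hvne : v ≠ 0 := by
    intro h
    exact hx (by rw [← hv0, h]; rfl)
  have htan : y * v 0 + x * v 1 = 0 := by rw [hv0, hv1]; ring
  set a := ‖x‖ with ha
  set b := ‖y‖ with hb
  have hab : a * b = 1 := by rw [ha, hb, ← norm_mul, hp, norm_one]
  have ha0 : 0 < a := norm_pos_iff.mpr hx
  have hb0 : 0 < b := by nlinarith
  set N : ℝ := a ^ 2 + b ^ 2 with hN
  have hN2 : 2 ≤ N := by nlinarith [sq_nonneg (a - b)]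
  have hN0 : 0 < N := by linarith
  -- norms
  have hnp : ‖p‖ = Real.sqrt N := by
    rw [EuclideanSpace.norm_eq]
    simp [Fin.sum_univ_two, ← hxdef, ← hydef, ← ha, ← hb, hN]
  have hnv : ‖v‖ = Real.sqrt N := by
    rw [EuclideanSpace.norm_eq]
    simp [Fin.sum_univ_two, hv0, hv1, ← ha, ← hb, hN]
  have hnpnv : ‖p‖ * ‖v‖ = N := by
    rw [hnp, hnv]; exact Real.mul_self_sqrt hN0.le
  -- inner product
  have hinner : (inner ℂ p v : ℂ) = ((a ^ 2 - b ^ 2 : ℝ) : ℂ) := by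
    have h1 : (starRingEnd ℂ) x * x = ((a ^ 2 : ℝ) : ℂ) := by
      rw [RCLike.conj_mul]; norm_cast
    have h2 : (starRingEnd ℂ) y * y = ((b ^ 2 : ℝ) : ℂ) := by
      rw [RCLike.conj_mul]; norm_cast
    calc (inner ℂ p v : ℂ) = (starRingEnd ℂ) x * x + (starRingEnd ℂ) y * (-y) := by
          simp [PiLp.inner_apply, Fin.sum_univ_two, RCLike.inner_apply, hv0, hv1]
          rw [← hxdef, ← hydef]; ring
      _ = ((a ^ 2 - b ^ 2 : ℝ) : ℂ) := by rw [mul_neg, h1, h2]; push_cast; ring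
  set c : ℝ := |a ^ 2 - b ^ 2| / N with hc
  have hangle : vecAngle p v = Real.arccos c := by
    rw [vecAngle, hinner, hnpnv, Complex.norm_real, Real.norm_eq_abs]
  have hc0 : 0 ≤ c := by positivity
  have hc1 : c ≤ 1 := by
    rw [hc, div_le_one hN0]
    rcases abs_cases (a ^ 2 - b ^ 2) with ⟨h, _⟩ | ⟨h, _⟩ <;> rw [h] <;> nlinarith
  set θ : ℝ := Real.arccos c with hθ
  have hθ0 : 0 ≤ θ := Real.arccos_nonneg c
  have hθle : θ ≤ Real.pi / 2 := Real.arccos_le_pi_div_two.2 hc0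
  -- sin θ = 2 / N
  have hsin : Real.sin θ = 2 / N := by
    rw [hθ, Real.sin_arccos]
    have h1 : 1 - c ^ 2 = (2 / N) ^ 2 := by
      rw [hc, div_pow, sq_abs]
      field_simp
      nlinarith
    rw [h1, Real.sqrt_sq (by positivity)]
  -- θ ≤ π / N
  have hθbound : θ ≤ Real.pi / N := by
    have h := Real.mul_le_sin hθ0 hθle
    rw [hsin] at h
    have hπ := Real.pi_pos
    rw [le_div_iff₀ hN0]
    calc θ * N = (2 / Real.pi * θ) * (Real.pi * N / 2) := by field_simp
      _ ≤ (2 / N) * (Real.pi * N / 2) := by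
          apply mul_le_mul_of_nonneg_right h; positivity
      _ = Real.pi := by field_simp
  -- the infimum is at most θ
  set S : Set ℝ := {a : ℝ | ∃ w : EuclideanSpace ℂ (Fin 2),
      y * w 0 + x * w 1 = 0 ∧ w ≠ 0 ∧ a = vecAngle p w} with hS
  have hmem : θ ∈ S := ⟨v, htan, hvne, hangle.symm⟩
  have hbdd : BddBelow S := by
    refine ⟨0, fun t ht => ?_⟩
    obtain ⟨w, _, _, htw⟩ := ht
    rw [htw]
    exact Real.arccos_nonneg _
  have hInf : sInf S ≤ θ := csInf_le hbdd hmem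
  -- conclude
  have hsqrtN : 1 < Real.sqrt N := by
    have : Real.sqrt 1 < Real.sqrt N := Real.sqrt_lt_sqrt (by norm_num) (by linarith)
    simpa using this
  have hfinal : Real.pi / N < Real.pi / ‖p‖ := by
    rw [hnp]
    apply div_lt_div_of_pos_left Real.pi_pos (by positivity)
    calc Real.sqrt N = Real.sqrt N * 1 := by ring
      _ < Real.sqrt N * Real.sqrt N := by
          apply mul_lt_mul_of_pos_left hsqrtN (by positivity)
      _ = N := Real.mul_self_sqrt hN0.le
  calc sInf S ≤ θ := hInf
    _ ≤ Real.pi / N := hθbound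
    _ < Real.pi / ‖p‖ := hfinal
end

section
/- Let f = ∏_{i∈I} l_i : V → ℂ be a finite product of nonzero linear forms l_i ∈ V*, and let X = f⁻¹(1). Then the norm of the differential ‖d_x f‖ is bounded from below on X: there exists c > 0 such that ‖d_x f‖ ≥ c for all x ∈ X. -/
open Finset Filter Metric Topology

private lemma two_pow_bound (x y : ℝ) (hx : 0 ≤ x) (hy : 0 ≤ y) (N : ℕ) :
    (x + y) ^ N ≤ 2 ^ N * (x ^ N + y ^ N) := by
  have h1 : x + y ≤ 2 * max x y := by
    rcases le_total x y with h | h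
    · rw [max_eq_right h]; linarith
    · rw [max_eq_left h]; linarith
  calc (x+y)^N ≤ (2 * max x y)^N := by
        apply pow_le_pow_left₀ (by linarith) h1
  _ = 2^N * (max x y)^N := mul_pow 2 _ N
  _ ≤ 2^N * (x^N + y^N) := by
      apply mul_le_mul_of_nonneg_left _ (by positivity)
      rcases le_total x y with h | h
      · rw [max_eq_right h]; nlinarith [pow_nonneg hx N]
      · rw [max_eq_left h]; nlinarith [pow_nonneg hy N]

private lemma nat_exp_arith (m k : ℕ) (hm : 1 ≤ m) (hmk : m < k) :
    (m-1)*k + (k-m) = (k-1)*m ∧ (m-1)*k + k = m*k := by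
  have h1 : m ≤ k * m := Nat.le_mul_of_pos_left m (by omega)
  have h2 : k ≤ k * m := Nat.le_mul_of_pos_right k (by omega)
  have e1 : (m-1)*k = m*k - k := by rw [Nat.sub_mul, one_mul]
  have e2 : (k-1)*m = k*m - m := by rw [Nat.sub_mul, one_mul]
  have e3 : m*k = k*m := Nat.mul_comm m k
  omega


set_option maxHeartbeats 2000000 in
private lemma key_lower_bound (d : ℕ) (ι : Type) [Fintype ι] [DecidableEq ι]
    (l : ι → (EuclideanSpace ℂ (Fin d) →L[ℂ] ℂ)) (hl : ∀ i, l i ≠ 0) :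
    ∀ (N : ℕ) (S : Finset ι), S.card ≤ N → S.Nonempty →
    ∃ c : ℝ, 0 < c ∧ ∀ y : EuclideanSpace ℂ (Fin d),
      c * ‖∏ i ∈ S, l i y‖ ^ (S.card - 1) ≤
        ‖∑ i ∈ S, (∏ j ∈ S.erase i, l j y) • l i‖ ^ S.card := by
  intro N
  induction N with
  | zero => intro S hcard hS; exact absurd (Finset.card_pos.mpr hS) (by omega)
  | succ N ih =>
    intro S hcard hS
    classical
    by_cases hk1 : S.card = 1
    · obtain ⟨i₀, rfl⟩ := Finset.card_eq_one.mp hk1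
      refine ⟨‖l i₀‖, norm_pos_iff.mpr (hl i₀), fun y => ?_⟩
      simp
    have hk2 : 2 ≤ S.card := by
      have := Finset.card_pos.mpr hS; omega
    by_contra hcon
    push_neg at hcon
    set Λ : (EuclideanSpace ℂ (Fin d)) →ₗ[ℂ] (ι → ℂ) :=
      { toFun := fun y i => if i ∈ S then l i y else 0
        map_add' := by intro a b; funext i; by_cases h : i ∈ S <;> simp [h]
        map_smul' := by intro c a; funext i; by_cases h : i ∈ S <;> simp [h]
      } with hΛdef
    have hΛapp : ∀ (y : EuclideanSpace ℂ (Fin d)) (i : ι), Λ y i = if i ∈ S then l i y else 0 :=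
      fun y i => rfl
    have hseq : ∀ n : ℕ, ∃ y : EuclideanSpace ℂ (Fin d), ‖Λ y‖ = 1 ∧ (∀ i ∈ S, l i y ≠ 0) ∧
        ‖∑ i ∈ S, (∏ j ∈ S.erase i, l j y) • l i‖ ^ S.card <
          ((n:ℝ)+1)⁻¹ * ‖∏ i ∈ S, l i y‖ ^ (S.card - 1) := by
      intro n
      obtain ⟨y₀, hy₀⟩ := hcon ((n:ℝ)+1)⁻¹ (by positivity)
      have hf0 : (∏ i ∈ S, l i y₀) ≠ 0 := by
        intro h
        rw [h, norm_zero, zero_pow (by omega : S.card - 1 ≠ 0), mul_zero] at hy₀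
        exact absurd hy₀ (not_lt.mpr (by positivity))
      have hcomp : ∀ i ∈ S, l i y₀ ≠ 0 := Finset.prod_ne_zero_iff.mp hf0
      have hΛ0 : Λ y₀ ≠ 0 := by
        obtain ⟨i₀, hi₀⟩ := hS
        intro h
        have h2 := congrFun h i₀
        rw [hΛapp, if_pos hi₀] at h2
        exact hcomp i₀ hi₀ h2
      set r : ℝ := ‖Λ y₀‖ with hrdef
      have hr : 0 < r := norm_pos_iff.mpr hΛ0
      set c₀ : ℂ := ((r:ℂ))⁻¹ with hc₀def
      have hc₀norm : ‖c₀‖ = r⁻¹ := by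
        rw [hc₀def, norm_inv, Complex.norm_real, Real.norm_eq_abs, abs_of_pos hr]
      refine ⟨c₀ • y₀, ?_, ?_, ?_⟩
      · rw [map_smul, norm_smul, hc₀norm, inv_mul_cancel₀ hr.ne']
      · intro i hi
        rw [map_smul, smul_eq_mul]
        exact mul_ne_zero (by simp [hc₀def, hr.ne']) (hcomp i hi)
      · have hly : ∀ j, l j (c₀ • y₀) = c₀ * l j y₀ := fun j => by rw [map_smul, smul_eq_mul]
        have hprod : (∏ i ∈ S, l i (c₀ • y₀)) = c₀ ^ S.card * ∏ i ∈ S, l i y₀ := by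
          simp only [hly]
          rw [Finset.prod_mul_distrib, Finset.prod_const]
        have hsum : (∑ i ∈ S, (∏ j ∈ S.erase i, l j (c₀ • y₀)) • l i)
            = c₀ ^ (S.card - 1) • ∑ i ∈ S, (∏ j ∈ S.erase i, l j y₀) • l i := by
          rw [Finset.smul_sum]
          refine Finset.sum_congr rfl fun i hi => ?_
          have : (∏ j ∈ S.erase i, l j (c₀ • y₀)) = c₀ ^ (S.card - 1) * ∏ j ∈ S.erase i, l j y₀ := by
            simp only [hly]
            rw [Finset.prod_mul_distrib, Finset.prod_const, Finset.card_erase_of_mem hi]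
          rw [this, mul_smul]
        rw [hsum, hprod, norm_smul (c₀ ^ (S.card - 1)) (∑ i ∈ S, (∏ j ∈ S.erase i, l j y₀) • l i),
          norm_mul, norm_pow, norm_pow, hc₀norm]
        rw [mul_pow, mul_pow, ← pow_mul, ← pow_mul]
        calc (r⁻¹) ^ ((S.card - 1) * S.card) * ‖∑ i ∈ S, (∏ j ∈ S.erase i, l j y₀) • l i‖ ^ S.card
            < (r⁻¹) ^ ((S.card - 1) * S.card) * (((n:ℝ)+1)⁻¹ * ‖∏ i ∈ S, l i y₀‖ ^ (S.card - 1)) := by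
              apply mul_lt_mul_of_pos_left hy₀ (by positivity)
        _ = ((n:ℝ)+1)⁻¹ * ((r⁻¹) ^ (S.card * (S.card - 1)) * ‖∏ i ∈ S, l i y₀‖ ^ (S.card - 1)) := by
              rw [Nat.mul_comm (S.card - 1) S.card]; ring
    choose Y hY1 hY2 hY3 using hseq
    have hLclosed : IsClosed ((LinearMap.range Λ : Submodule ℂ (ι → ℂ)) : Set (ι → ℂ)) :=
      Submodule.closed_of_finiteDimensional _
    have hK : IsCompact (Metric.sphere (0 : ι → ℂ) 1 ∩ (LinearMap.range Λ : Set (ι → ℂ))) :=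
      (isCompact_sphere 0 1).inter_right hLclosed
    have hmem : ∀ n, Λ (Y n) ∈ Metric.sphere (0 : ι → ℂ) 1 ∩ (LinearMap.range Λ : Set (ι → ℂ)) :=
      fun n => ⟨mem_sphere_zero_iff_norm.mpr (hY1 n), LinearMap.mem_range_self Λ (Y n)⟩
    obtain ⟨τ, ⟨hτs, hτL⟩, φ, hφ, hφt⟩ := hK.tendsto_subseq hmem
    have hτ1 : ‖τ‖ = 1 := mem_sphere_zero_iff_norm.mp hτs
    obtain ⟨z, hz⟩ := hτL
    have hτz : ∀ i ∈ S, l i z = τ i := by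
      intro i hi; rw [← hz, hΛapp, if_pos hi]
    have hτnotS : ∀ i, i ∉ S → τ i = 0 := by
      intro i hi; rw [← hz, hΛapp, if_neg hi]
    have htend : Tendsto (fun n => Λ (Y (φ n))) atTop (𝓝 τ) := by
      exact hφt
    have htl : ∀ i ∈ S, Tendsto (fun n => l i (Y (φ n))) atTop (𝓝 (τ i)) := by
      intro i hi
      have h1 : Tendsto (fun n => Λ (Y (φ n)) i) atTop (𝓝 (τ i)) :=
        ((continuous_apply i).tendsto τ).comp htend
      simpa only [hΛapp, if_pos hi] using h1
    have hb : ∀ n, ∀ i ∈ S, ‖l i (Y n)‖ ≤ 1 := by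
      intro n i hi
      have h1 := norm_le_pi_norm (Λ (Y n)) i
      rwa [hΛapp, if_pos hi, hY1 n] at h1
    have hfb : ∀ m : ℕ, ‖∏ i ∈ S, l i (Y m)‖ ^ (S.card - 1) ≤ 1 := by
      intro m
      apply pow_le_one₀ (norm_nonneg _)
      rw [norm_prod]
      exact Finset.prod_le_one (fun i _ => norm_nonneg _) (fun i hi => hb m i hi)
    have hDk : ∀ n, ‖∑ i ∈ S, (∏ j ∈ S.erase i, l j (Y (φ n))) • l i‖ ^ S.card ≤ ((n:ℝ)+1)⁻¹ := by
      intro n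
      have h1 := (hY3 (φ n)).le
      have h2 : ((φ n : ℝ)+1)⁻¹ ≤ ((n:ℝ)+1)⁻¹ := by
        have h3 : (n:ℝ) ≤ (φ n : ℝ) := Nat.cast_le.mpr hφ.le_apply
        apply inv_anti₀ (by positivity) (by linarith)
      calc ‖∑ i ∈ S, (∏ j ∈ S.erase i, l j (Y (φ n))) • l i‖ ^ S.card
          ≤ ((φ n:ℝ)+1)⁻¹ * ‖∏ i ∈ S, l i (Y (φ n))‖ ^ (S.card -1) := h1
      _ ≤ ((φ n:ℝ)+1)⁻¹ * 1 := mul_le_mul_of_nonneg_left (hfb _) (by positivity)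
      _ = ((φ n:ℝ)+1)⁻¹ := mul_one _
      _ ≤ ((n:ℝ)+1)⁻¹ := h2
    have htends0 : Tendsto (fun n : ℕ => ((n:ℝ)+1)⁻¹) atTop (𝓝 0) := by
      simpa only [one_div] using tendsto_one_div_add_atTop_nhds_zero_nat (𝕜 := ℝ)
    by_cases hTzero : ∀ i ∈ S, τ i ≠ 0
    · set L₀ : ℂ := ∑ i ∈ S, (∏ j ∈ S.erase i, τ j) * τ i with hL₀def
      have hL₀ : L₀ = (S.card : ℂ) * ∏ i ∈ S, τ i := by
        rw [hL₀def, Finset.sum_congr rfl (fun i hi => Finset.prod_erase_mul S _ hi),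
          Finset.sum_const, nsmul_eq_mul]
      have hL₀ne : L₀ ≠ 0 := by
        rw [hL₀]
        exact mul_ne_zero (Nat.cast_ne_zero.mpr (by omega)) (Finset.prod_ne_zero_iff.mpr hTzero)
      have huval : ∀ n, (∑ i ∈ S, (∏ j ∈ S.erase i, l j (Y (φ n))) • l i) z
          = ∑ i ∈ S, (∏ j ∈ S.erase i, l j (Y (φ n))) * τ i := by
        intro n
        rw [ContinuousLinearMap.sum_apply]
        refine Finset.sum_congr rfl fun i hi => ?_
        rw [ContinuousLinearMap.smul_apply, smul_eq_mul, hτz i hi]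
      have hulim : Tendsto (fun n => ∑ i ∈ S, (∏ j ∈ S.erase i, l j (Y (φ n))) * τ i)
          atTop (𝓝 L₀) := by
        rw [hL₀def]
        apply tendsto_finset_sum
        intro i hi
        exact (tendsto_finset_prod _ (fun j hj => htl j (Finset.mem_of_mem_erase hj))).mul_const _
      have hunorm : Tendsto (fun n => ‖∑ i ∈ S, (∏ j ∈ S.erase i, l j (Y (φ n))) * τ i‖ ^ S.card)
          atTop (𝓝 (‖L₀‖ ^ S.card)) := hulim.norm.pow _
      have husq : Tendsto (fun n => ‖∑ i ∈ S, (∏ j ∈ S.erase i, l j (Y (φ n))) * τ i‖ ^ S.card)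
          atTop (𝓝 0) := by
        have hg0 : Tendsto (fun n : ℕ => ((n:ℝ)+1)⁻¹ * ‖z‖ ^ S.card) atTop (𝓝 0) := by
          simpa using htends0.mul_const (‖z‖ ^ S.card)
        refine squeeze_zero (fun n => by positivity) (fun n => ?_) hg0
        · rw [← huval n]
          calc ‖(∑ i ∈ S, (∏ j ∈ S.erase i, l j (Y (φ n))) • l i) z‖ ^ S.card
              ≤ (‖∑ i ∈ S, (∏ j ∈ S.erase i, l j (Y (φ n))) • l i‖ * ‖z‖) ^ S.card := by
                apply pow_le_pow_left₀ (norm_nonneg _) (ContinuousLinearMap.le_opNorm _ _)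
          _ = ‖∑ i ∈ S, (∏ j ∈ S.erase i, l j (Y (φ n))) • l i‖ ^ S.card * ‖z‖ ^ S.card :=
                mul_pow _ _ _
          _ ≤ ((n:ℝ)+1)⁻¹ * ‖z‖ ^ S.card :=
                mul_le_mul_of_nonneg_right (hDk n) (by positivity)
      have hzero : ‖L₀‖ ^ S.card = 0 := tendsto_nhds_unique hunorm husq
      exact hL₀ne (norm_eq_zero.mp ((pow_eq_zero_iff (by omega : S.card ≠ 0)).mp hzero))
    · -- some component of τ vanishes: use the inductive hypothesis
      push_neg at hTzero
      obtain ⟨i₁, hi₁S, hi₁0⟩ := hTzero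
      set T : Finset ι := S.filter (fun i => τ i = 0) with hTdef
      have hTS : T ⊆ S := Finset.filter_subset _ _
      have hT : T.Nonempty := ⟨i₁, Finset.mem_filter.mpr ⟨hi₁S, hi₁0⟩⟩
      have hτT : ∀ i ∈ T, τ i = 0 := fun i hi => (Finset.mem_filter.mp hi).2
      have hτST : ∀ i ∈ S \ T, τ i ≠ 0 := by
        intro i hi h
        rw [Finset.mem_sdiff] at hi
        exact hi.2 (Finset.mem_filter.mpr ⟨hi.1, h⟩)
      have hτne : τ ≠ 0 := by intro h; rw [h, norm_zero] at hτ1; norm_num at hτ1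
      obtain ⟨i₀, hi₀⟩ := Function.ne_iff.mp hτne
      have hi₀S : i₀ ∈ S := by by_contra h; exact hi₀ (hτnotS i₀ h)
      have hi₀T : i₀ ∉ T := fun h => hi₀ (hτT i₀ h)
      have hmk : T.card < S.card := Finset.card_lt_card ⟨hTS, fun h => hi₀T (h hi₀S)⟩
      have hm1 : 1 ≤ T.card := Finset.card_pos.mpr hT
      obtain ⟨cT, hcT, hIH⟩ := ih T (by omega) hT
      set k := S.card with hkdef
      set m := T.card with hmdef
      obtain ⟨e₁, e₂⟩ := nat_exp_arith m k hm1 hmk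
      set ρ : ℝ := ∑ i ∈ S \ T, ‖l i‖ with hρdef
      have hρ0 : 0 ≤ ρ := Finset.sum_nonneg fun i _ => norm_nonneg _
      set a : ℕ → ℝ := fun n => ∏ i ∈ T, ‖l i (Y (φ n))‖ with hadef
      set g : ℕ → ℝ := fun n => ∏ i ∈ S \ T, ‖l i (Y (φ n))‖ with hgdef
      have ha_pos : ∀ n, 0 < a n := fun n =>
        Finset.prod_pos fun i hi => norm_pos_iff.mpr (hY2 (φ n) i (hTS hi))
      have hg_pos : ∀ n, 0 < g n := fun n =>
        Finset.prod_pos fun i hi => norm_pos_iff.mpr (hY2 (φ n) i (Finset.mem_sdiff.mp hi).1)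
      have ha1 : ∀ n, a n ≤ 1 := fun n =>
        Finset.prod_le_one (fun i _ => norm_nonneg _) (fun i hi => hb (φ n) i (hTS hi))
      have hg1 : ∀ n, g n ≤ 1 := fun n =>
        Finset.prod_le_one (fun i _ => norm_nonneg _)
          (fun i hi => hb (φ n) i (Finset.mem_sdiff.mp hi).1)
      have ha_lim : Tendsto a atTop (𝓝 0) := by
        have h1 : Tendsto a atTop (𝓝 (∏ i ∈ T, ‖τ i‖)) :=
          tendsto_finset_prod _ fun i hi => (htl i (hTS hi)).norm
        have h2 : (∏ i ∈ T, ‖τ i‖) = 0 :=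
          Finset.prod_eq_zero (Finset.mem_filter.mpr ⟨hi₁S, hi₁0⟩) (by rw [hi₁0, norm_zero])
        rwa [h2] at h1
      set γ : ℝ := ∏ i ∈ S \ T, ‖τ i‖ with hγdef
      have hγpos : 0 < γ := Finset.prod_pos fun i hi => norm_pos_iff.mpr (hτST i hi)
      have hg_lim : Tendsto g atTop (𝓝 γ) :=
        tendsto_finset_prod _ fun i hi => (htl i (Finset.mem_sdiff.mp hi).1).norm
      -- decomposition identity
      have hdec : ∀ y : EuclideanSpace ℂ (Fin d),
          (∑ i ∈ S, (∏ j ∈ S.erase i, l j y) • l i)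
            = (∏ j ∈ T, l j y) • (∑ i ∈ S \ T, (∏ j ∈ (S \ T).erase i, l j y) • l i)
              + (∏ j ∈ S \ T, l j y) • (∑ i ∈ T, (∏ j ∈ T.erase i, l j y) • l i) := by
        intro y
        rw [← Finset.sum_sdiff hTS (f := fun i => (∏ j ∈ S.erase i, l j y) • l i)]
        congr 1
        · rw [Finset.smul_sum]
          refine Finset.sum_congr rfl fun i hi => ?_
          have hsub : T ⊆ S.erase i := by
            intro x hx
            rw [Finset.mem_erase]
            exact ⟨fun h => (Finset.mem_sdiff.mp hi).2 (h ▸ hx), hTS hx⟩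
          have hset : (S.erase i) \ T = (S \ T).erase i := by
            ext x
            simp only [Finset.mem_erase, Finset.mem_sdiff]
            tauto
          have hps := Finset.prod_sdiff hsub (f := fun j => l j y)
          rw [hset] at hps
          rw [smul_smul, ← hps]
          congr 1
          ring
        · rw [Finset.smul_sum]
          refine Finset.sum_congr rfl fun i hi => ?_
          have hsub : T.erase i ⊆ S.erase i := Finset.erase_subset_erase _ hTS
          have hset : (S.erase i) \ (T.erase i) = S \ T := by
            ext x
            simp only [Finset.mem_erase, Finset.mem_sdiff]
            constructor
            · rintro ⟨⟨hxi, hxS⟩, hninT⟩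
              exact ⟨hxS, fun hxT => hninT ⟨hxi, hxT⟩⟩
            · rintro ⟨hxS, hxT⟩
              exact ⟨⟨fun h => hxT (h ▸ hi), hxS⟩, fun hc => hxT hc.2⟩
          have hps := Finset.prod_sdiff hsub (f := fun j => l j y)
          rw [hset] at hps
          rw [smul_smul, ← hps]
      -- R bound
      have hRle : ∀ n, ‖∑ i ∈ S \ T, (∏ j ∈ (S \ T).erase i, l j (Y (φ n))) • l i‖ ≤ ρ := by
        intro n
        refine (norm_sum_le _ _).trans ?_
        rw [hρdef]
        apply Finset.sum_le_sum
        intro i hi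
        rw [norm_smul (∏ j ∈ (S \ T).erase i, l j (Y (φ n))) (l i)]
        have hc1 : ‖∏ j ∈ (S \ T).erase i, l j (Y (φ n))‖ ≤ 1 := by
          rw [norm_prod]
          exact Finset.prod_le_one (fun j _ => norm_nonneg _)
            (fun j hj => hb (φ n) j (Finset.mem_sdiff.mp (Finset.mem_of_mem_erase hj)).1)
        exact mul_le_of_le_one_left (norm_nonneg _) hc1
      -- triangle inequality step
      have htri : ∀ n, g n * ‖∑ i ∈ T, (∏ j ∈ T.erase i, l j (Y (φ n))) • l i‖
          ≤ ‖∑ i ∈ S, (∏ j ∈ S.erase i, l j (Y (φ n))) • l i‖ + a n * ρ := by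
        intro n
        have h1 := hdec (Y (φ n))
        have h2 : (∏ j ∈ S \ T, l j (Y (φ n))) • (∑ i ∈ T, (∏ j ∈ T.erase i, l j (Y (φ n))) • l i)
            = (∑ i ∈ S, (∏ j ∈ S.erase i, l j (Y (φ n))) • l i)
              - (∏ j ∈ T, l j (Y (φ n))) •
                  (∑ i ∈ S \ T, (∏ j ∈ (S \ T).erase i, l j (Y (φ n))) • l i) := by
          rw [h1]; abel
        calc g n * ‖∑ i ∈ T, (∏ j ∈ T.erase i, l j (Y (φ n))) • l i‖
            = ‖(∏ j ∈ S \ T, l j (Y (φ n))) •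
                (∑ i ∈ T, (∏ j ∈ T.erase i, l j (Y (φ n))) • l i)‖ := by
              rw [norm_smul (∏ j ∈ S \ T, l j (Y (φ n)))
                (∑ i ∈ T, (∏ j ∈ T.erase i, l j (Y (φ n))) • l i), norm_prod]
        _ = ‖(∑ i ∈ S, (∏ j ∈ S.erase i, l j (Y (φ n))) • l i)
              - (∏ j ∈ T, l j (Y (φ n))) •
                  (∑ i ∈ S \ T, (∏ j ∈ (S \ T).erase i, l j (Y (φ n))) • l i)‖ := by rw [h2]
        _ ≤ ‖∑ i ∈ S, (∏ j ∈ S.erase i, l j (Y (φ n))) • l i‖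
              + ‖(∏ j ∈ T, l j (Y (φ n))) •
                  (∑ i ∈ S \ T, (∏ j ∈ (S \ T).erase i, l j (Y (φ n))) • l i)‖ := norm_sub_le _ _
        _ ≤ ‖∑ i ∈ S, (∏ j ∈ S.erase i, l j (Y (φ n))) • l i‖ + a n * ρ := by
              apply add_le_add (le_refl _)
              rw [norm_smul (∏ j ∈ T, l j (Y (φ n)))
                (∑ i ∈ S \ T, (∏ j ∈ (S \ T).erase i, l j (Y (φ n))) • l i), norm_prod]
              exact mul_le_mul_of_nonneg_left (hRle n) (by positivity)
      -- the failing inequality, weakened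
      have hfail : ∀ n, ‖∑ i ∈ S, (∏ j ∈ S.erase i, l j (Y (φ n))) • l i‖ ^ k ≤ a n ^ (k-1) := by
        intro n
        have h1 := (hY3 (φ n)).le
        have h2 : ‖∏ i ∈ S, l i (Y (φ n))‖ = g n * a n := by
          rw [norm_prod, ← Finset.prod_sdiff hTS (f := fun i => ‖l i (Y (φ n))‖)]
        have h3 : ((φ n:ℝ)+1)⁻¹ ≤ 1 := by
          have h4 : (1:ℝ) ≤ (φ n:ℝ)+1 := by
            have := Nat.cast_nonneg (α := ℝ) (φ n); linarith
          have := inv_anti₀ one_pos h4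
          simpa using this
        have hga : g n * a n ≤ 1 * a n := mul_le_mul_of_nonneg_right (hg1 n) (ha_pos n).le
        have hga0 : (0:ℝ) ≤ g n * a n := mul_nonneg (hg_pos n).le (ha_pos n).le
        have h5 : (g n * a n) ^ (k-1) ≤ (1 * a n) ^ (k-1) := pow_le_pow_left₀ hga0 hga _
        have h6 : (0:ℝ) ≤ (g n * a n) ^ (k-1) := pow_nonneg hga0 _
        calc ‖∑ i ∈ S, (∏ j ∈ S.erase i, l j (Y (φ n))) • l i‖ ^ k
            ≤ ((φ n:ℝ)+1)⁻¹ * (g n * a n) ^ (k-1) := by rw [← h2]; exact h1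
        _ ≤ 1 * (1 * a n) ^ (k-1) := mul_le_mul h3 h5 h6 one_pos.le
        _ = a n ^ (k-1) := by rw [one_mul, one_mul]
      -- the key inequality
      have hkey : ∀ n, cT ^ k * g n ^ (m*k) ≤ 2 ^ (m*k+k) * (a n ^ (k-m) + a n ^ k * ρ ^ (m*k)) := by
        intro n
        set A := ‖∑ i ∈ S, (∏ j ∈ S.erase i, l j (Y (φ n))) • l i‖ with hAdef
        set B := ‖∑ i ∈ T, (∏ j ∈ T.erase i, l j (Y (φ n))) • l i‖ with hBdef
        have hA0 : 0 ≤ A := norm_nonneg _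
        have hB0 : 0 ≤ B := norm_nonneg _
        have han := ha_pos n
        have hIHn : cT * a n ^ (m - 1) ≤ B ^ m := by
          have h := hIH (Y (φ n))
          rwa [norm_prod] at h
        have s1 : cT * a n ^ (m-1) * g n ^ m ≤ (A + a n * ρ) ^ m := by
          calc cT * a n ^ (m-1) * g n ^ m ≤ B ^ m * g n ^ m := by
                apply mul_le_mul_of_nonneg_right hIHn (pow_nonneg (hg_pos n).le m)
          _ = (g n * B) ^ m := by rw [mul_pow]; ring
          _ ≤ (A + a n * ρ) ^ m := pow_le_pow_left₀ (mul_nonneg (hg_pos n).le hB0) (htri n) m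
        have s2 : (A + a n * ρ) ^ m ≤ 2 ^ m * (A ^ m + (a n * ρ) ^ m) :=
          two_pow_bound A (a n * ρ) hA0 (mul_nonneg (ha_pos n).le hρ0) m
        have s3 : cT * a n ^ (m-1) * g n ^ m ≤ 2 ^ m * (A ^ m + (a n * ρ) ^ m) := s1.trans s2
        have s4 : (cT * a n ^ (m-1) * g n ^ m) ^ k ≤ (2 ^ m * (A ^ m + (a n * ρ) ^ m)) ^ k :=
          pow_le_pow_left₀ (mul_nonneg (mul_nonneg hcT.le (pow_nonneg (ha_pos n).le _))
            (pow_nonneg (hg_pos n).le _)) s3 k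
        have s6 : (A ^ m + (a n * ρ) ^ m) ^ k ≤ 2 ^ k * ((A ^ m) ^ k + ((a n * ρ) ^ m) ^ k) :=
          two_pow_bound _ _ (pow_nonneg hA0 m) (pow_nonneg (mul_nonneg (ha_pos n).le hρ0) m) k
        have key1 : cT ^ k * a n ^ ((m-1)*k) * g n ^ (m*k)
            ≤ 2 ^ (m*k+k) * (a n ^ ((k-1)*m) + a n ^ (m*k) * ρ ^ (m*k)) := by
          calc cT ^ k * a n ^ ((m-1)*k) * g n ^ (m*k)
              = (cT * a n ^ (m-1) * g n ^ m) ^ k := by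
                rw [mul_pow, mul_pow, ← pow_mul, ← pow_mul]
          _ ≤ (2 ^ m * (A ^ m + (a n * ρ) ^ m)) ^ k := s4
          _ = 2 ^ (m*k) * ((A ^ m + (a n * ρ) ^ m)) ^ k := by rw [mul_pow, ← pow_mul]
          _ ≤ 2 ^ (m*k) * (2 ^ k * ((A ^ m) ^ k + ((a n * ρ) ^ m) ^ k)) :=
                mul_le_mul_of_nonneg_left s6 (by positivity)
          _ = 2 ^ (m*k+k) * ((A ^ m) ^ k + ((a n * ρ) ^ m) ^ k) := by rw [pow_add]; ring
          _ ≤ 2 ^ (m*k+k) * (a n ^ ((k-1)*m) + a n ^ (m*k) * ρ ^ (m*k)) := by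
                apply mul_le_mul_of_nonneg_left _ (by positivity)
                apply add_le_add
                · calc (A^m)^k = (A^k)^m := by rw [← pow_mul, Nat.mul_comm m k, pow_mul]
                  _ ≤ (a n ^ (k-1))^m := pow_le_pow_left₀ (pow_nonneg hA0 k) (hfail n) m
                  _ = a n ^ ((k-1)*m) := by rw [← pow_mul]
                · apply le_of_eq
                  rw [← pow_mul, mul_pow]
        have p1 : a n ^ ((k-1)*m) = a n ^ ((m-1)*k) * a n ^ (k-m) := by rw [← pow_add, e₁]
        have p2 : a n ^ (m*k) = a n ^ ((m-1)*k) * a n ^ k := by rw [← pow_add, e₂]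
        have final : (cT ^ k * g n ^ (m*k)) * a n ^ ((m-1)*k)
            ≤ (2 ^ (m*k+k) * (a n ^ (k-m) + a n ^ k * ρ ^ (m*k))) * a n ^ ((m-1)*k) := by
          calc (cT ^ k * g n ^ (m*k)) * a n ^ ((m-1)*k)
              = cT ^ k * a n ^ ((m-1)*k) * g n ^ (m*k) := by ring
          _ ≤ 2 ^ (m*k+k) * (a n ^ ((k-1)*m) + a n ^ (m*k) * ρ ^ (m*k)) := key1
          _ = (2 ^ (m*k+k) * (a n ^ (k-m) + a n ^ k * ρ ^ (m*k))) * a n ^ ((m-1)*k) := by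
                rw [p1, p2]; ring
        exact le_of_mul_le_mul_right final (pow_pos han _)
      -- limits and contradiction
      have hLHSlim : Tendsto (fun n => cT ^ k * g n ^ (m*k)) atTop (𝓝 (cT ^ k * γ ^ (m*k))) :=
        (hg_lim.pow _).const_mul _
      have hRHSlim : Tendsto (fun n => 2 ^ (m*k+k) * (a n ^ (k-m) + a n ^ k * ρ ^ (m*k)))
          atTop (𝓝 0) := by
        have h1 : Tendsto (fun n => a n ^ (k-m) + a n ^ k * ρ ^ (m*k)) atTop
            (𝓝 ((0:ℝ) ^ (k-m) + (0:ℝ) ^ k * ρ ^ (m*k))) :=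
          (ha_lim.pow _).add ((ha_lim.pow _).mul_const _)
        have h2 : (0:ℝ) ^ (k-m) + (0:ℝ) ^ k * ρ ^ (m*k) = 0 := by
          rw [zero_pow (by omega), zero_pow (by omega)]; ring
        rw [h2] at h1
        simpa using h1.const_mul ((2:ℝ) ^ (m*k+k))
      have hfin := le_of_tendsto_of_tendsto' hLHSlim hRHSlim hkey
      have hpos : 0 < cT ^ k * γ ^ (m*k) := mul_pos (pow_pos hcT k) (pow_pos hγpos _)
      linarith

open Finset in
/-- Let `f = ∏ᵢ lᵢ : ℂ^d → ℂ` be a finite product of nonzero linear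
forms and `X = f⁻¹(1)`.  The differential of `f` at `x` is
`d_x f = ∑ᵢ (∏_{j≠i} lⱼ(x)) • lᵢ` (Leibniz rule).  Then `‖d_x f‖` is bounded from
below on `X`: there is `c > 0` with `c ≤ ‖d_x f‖` for all `x ∈ X`. -/
theorem differential_of_product_of_linear_forms_bounded_below
    (d : ℕ) (ι : Type) [Fintype ι] [Nonempty ι] [DecidableEq ι]
    (l : ι → (EuclideanSpace ℂ (Fin d) →L[ℂ] ℂ)) (hl : ∀ i, l i ≠ 0) :
    ∃ c : ℝ, 0 < c ∧ ∀ x : EuclideanSpace ℂ (Fin d),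
      (∏ i, l i x) = 1 →
      c ≤ ‖∑ i, (∏ j ∈ univ.erase i, l j x) • l i‖ := by
  obtain ⟨c, hc, hkey⟩ :=
    key_lower_bound d ι l hl (Finset.univ : Finset ι).card Finset.univ le_rfl univ_nonempty
  refine ⟨min c 1, lt_min hc one_pos, fun x hx => ?_⟩
  have h1 := hkey x
  rw [hx, norm_one, one_pow, mul_one] at h1
  rcases le_or_gt 1 ‖∑ i, (∏ j ∈ univ.erase i, l j x) • l i‖ with h | h
  · exact le_trans (min_le_right _ _) h
  · have hn1 : 1 ≤ (Finset.univ : Finset ι).card := Finset.card_pos.mpr univ_nonempty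
    have h2 : ‖∑ i, (∏ j ∈ univ.erase i, l j x) • l i‖ ^ (Finset.univ : Finset ι).card
        ≤ ‖∑ i, (∏ j ∈ univ.erase i, l j x) • l i‖ :=
      pow_le_of_le_one (norm_nonneg _) h.le (by omega)
    calc min c 1 ≤ c := min_le_left _ _
    _ ≤ ‖∑ i, (∏ j ∈ univ.erase i, l j x) • l i‖ ^ (Finset.univ : Finset ι).card := h1
    _ ≤ ‖∑ i, (∏ j ∈ univ.erase i, l j x) • l i‖ := h2
end

section
/- Let f : V → ℂ be a homogeneous polynomial of degree m ≥ 1 and X = f⁻¹(1). Then every v ∈ V with f(v) = 0 lies in the asymptotic cone of X, i.e., f⁻¹(0) ⊂ as(X), where as(X) is the closure of the set of all limits lim_{j→∞} λ_j x_j with x_j ∈ X, λ_j ∈ ℂ*, λ_j → 0. -/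
open Filter MvPolynomial

private lemma eval_smul_homog {d m : ℕ} {f : MvPolynomial (Fin d) ℂ}
    (hf : f.IsHomogeneous m) (c : ℂ) (x : Fin d → ℂ) :
    eval (c • x) f = c ^ m * eval x f := by
  rw [eval_eq', eval_eq', Finset.mul_sum]
  apply Finset.sum_congr rfl
  intro dd hdd
  have hdeg : ∑ i, dd i = m := by
    have h1 : (Finsupp.weight (fun _ => 1)) dd = m := hf (mem_support_iff.mp hdd)
    rw [← Finsupp.degree_eq_weight_one] at h1
    rw [← h1, Finsupp.degree]
    exact (Finset.sum_subset (Finset.subset_univ _)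
      (fun i _ hi => Finsupp.notMem_support_iff.mp hi)).symm
  have : ∏ i, (c • x) i ^ dd i = c ^ m * ∏ i, x i ^ dd i := by
    simp only [Pi.smul_apply, smul_eq_mul, mul_pow]
    rw [Finset.prod_mul_distrib, Finset.prod_pow_eq_pow_sum, hdeg]
  rw [this]; ring

/-- Let `f` be a nonzero homogeneous polynomial of degree `m ≥ 1` on
`ℂ^d` with `X = f⁻¹(1)` nonempty.  Then every zero of `f` lies in the asymptotic cone
of `X`, defined as the closure of the set of limits `lim λⱼ xⱼ` with `xⱼ ∈ X`,
`λⱼ ∈ ℂ*`, `λⱼ → 0`. -/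
theorem zero_set_subset_asymptotic_cone
    (d m : ℕ) (hm : 1 ≤ m) (f : MvPolynomial (Fin d) ℂ) (hf : f.IsHomogeneous m)
    (hfne : f ≠ 0) (hX : ∃ x : Fin d → ℂ, eval x f = 1)
    (w : Fin d → ℂ) (hw : eval w f = 0) :
    w ∈ closure {v : Fin d → ℂ | ∃ (x : ℕ → Fin d → ℂ) (lam : ℕ → ℂ),
        (∀ j, eval (x j) f = 1) ∧ (∀ j, lam j ≠ 0) ∧
        Tendsto lam atTop (nhds 0) ∧
        Tendsto (fun j => lam j • x j) atTop (nhds v)} := by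
  apply subset_closure
  obtain ⟨z, hz⟩ := hX
  -- the one-variable polynomial p(t) = f(w + t (z - w))
  set g : Fin d → Polynomial ℂ :=
    fun i => Polynomial.C (w i) + Polynomial.C (z i - w i) * Polynomial.X with hg
  set p : Polynomial ℂ := MvPolynomial.aeval g f with hp
  have hpe : ∀ t : ℂ, p.eval t = eval (fun i => w i + t * (z i - w i)) f := by
    intro t
    have := MvPolynomial.comp_aeval_apply (R := ℂ) (f := g) (Polynomial.aeval t : Polynomial ℂ →ₐ[ℂ] ℂ) f
    simp only [hg, map_add, map_mul, Polynomial.aeval_C, Polynomial.aeval_X] at this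
    rw [hp]
    rw [show p.eval t = Polynomial.aeval t p from rfl, this]
    rw [MvPolynomial.aeval_def, Algebra.algebraMap_self, eval₂_id]
    simp only [RingHom.id_apply]
    have h : (fun i => w i + (z i - w i) * t) = fun i => w i + t * (z i - w i) := by
      funext i; ring
    rw [h]
  have hp1 : p.eval 1 = 1 := by
    rw [hpe]
    have h1 : (fun i => w i + 1 * (z i - w i)) = z := by funext i; ring
    rw [h1, hz]
  have hpne : p ≠ 0 := fun h => by simp [h] at hp1
  -- the roots of p together with 0 form a countable set, whose complement is dense
  have hfin : Set.Finite {t : ℂ | p.eval t = 0} := Polynomial.finite_setOf_isRoot hpne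
  have hdense : Dense ({t : ℂ | p.eval t = 0} ∪ {0})ᶜ :=
    Set.Countable.dense_compl ℂ ((hfin.countable).union (Set.countable_singleton 0))
  -- choose t j small with p.eval (t j) ≠ 0 and t j ≠ 0
  have hex : ∀ j : ℕ, ∃ t : ℂ, t ∈ Metric.ball (0 : ℂ) (1 / (j + 1)) ∧
      p.eval t ≠ 0 ∧ t ≠ 0 := by
    intro j
    have : ((1 : ℝ) / (j + 1)) > 0 := by positivity
    obtain ⟨t, ht1, ht2⟩ := hdense.exists_mem_open Metric.isOpen_ball
      ⟨0, Metric.mem_ball_self this⟩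
    refine ⟨t, ht2, ?_, ?_⟩
    · intro h; exact ht1 (Or.inl h)
    · intro h; exact ht1 (Or.inr h)
  choose t ht1 ht2 ht3 using hex
  have htlim : Tendsto t atTop (nhds 0) := by
    rw [tendsto_iff_dist_tendsto_zero]
    apply squeeze_zero (fun j => dist_nonneg) (fun j => le_of_lt ?_)
      tendsto_one_div_add_atTop_nhds_zero_nat
    simpa [Metric.mem_ball] using ht1 _
  -- the points u j = w + t j • (z - w), converging to w, with f (u j) ≠ 0
  set u : ℕ → Fin d → ℂ := fun j => w + t j • (z - w) with hu
  have hue : ∀ j, eval (u j) f = p.eval (t j) := by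
    intro j; rw [hpe]; congr 1
  have hulim : Tendsto u atTop (nhds w) := by
    have : Tendsto (fun j => w + t j • (z - w)) atTop (nhds (w + (0 : ℂ) • (z - w))) :=
      tendsto_const_nhds.add (htlim.smul_const _)
    simpa using this
  -- choose lam j with lam j ^ m = f (u j)
  have hmpos : 0 < m := hm
  have hlamex : ∀ j : ℕ, ∃ l : ℂ, l ^ m = eval (u j) f := fun j =>
    IsAlgClosed.exists_pow_nat_eq _ hmpos
  choose lam hlam using hlamex
  have hlamne : ∀ j, lam j ≠ 0 := by
    intro j h
    have := hlam j
    rw [h, zero_pow hmpos.ne', hue] at this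
    exact ht2 j this.symm
  -- lam → 0
  have hclim : Tendsto (fun j => eval (u j) f) atTop (nhds 0) := by
    have hcont : Continuous (fun x : Fin d → ℂ => eval x f) := by continuity
    have := (hcont.tendsto w).comp hulim
    rwa [hw] at this
  have hlamlim : Tendsto lam atTop (nhds 0) := by
    rw [tendsto_zero_iff_norm_tendsto_zero]
    have h1 : Tendsto (fun j => ‖lam j‖ ^ m) atTop (nhds 0) := by
      have : (fun j => ‖lam j‖ ^ m) = fun j => ‖eval (u j) f‖ := by
        funext j; rw [← norm_pow, hlam]
      rw [this]
      exact tendsto_zero_iff_norm_tendsto_zero.mp hclim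
    have h2 : Tendsto (fun x : ℝ => x ^ ((m : ℝ)⁻¹)) (nhds 0) (nhds 0) := by
      have := (Real.continuousAt_rpow_const 0 ((m : ℝ)⁻¹)
        (Or.inr (by positivity))).tendsto
      rwa [Real.zero_rpow (by positivity)] at this
    have h3 := h2.comp h1
    have : (fun j => (‖lam j‖ ^ m) ^ ((m : ℝ)⁻¹)) = fun j => ‖lam j‖ := by
      funext j
      rw [← Real.rpow_natCast (‖lam j‖) m, ← Real.rpow_mul (norm_nonneg _)]
      rw [mul_inv_cancel₀ (by positivity : (m : ℝ) ≠ 0), Real.rpow_one]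
    rwa [← this]
  -- the points x j = lam j ⁻¹ • u j lie in X
  refine ⟨fun j => (lam j)⁻¹ • u j, lam, ?_, hlamne, hlamlim, ?_⟩
  · intro j
    rw [eval_smul_homog hf, inv_pow, hlam, inv_mul_cancel₀]
    rw [hue]; exact ht2 j
  · have : (fun j => lam j • (lam j)⁻¹ • u j) = u := by
      funext j
      rw [smul_smul, mul_inv_cancel₀ (hlamne j), one_smul]
    rw [this]; exact hulim
end

section
/- Let {l_i}_{i∈I} be a finite family of nonzero linear forms on V = ℂ^d with ⋂_i Ker l_i = {0}, let f = ∏_{i∈I} l_i and X = f⁻¹(1). Then X is a covering space of degree |I| over the quotient (V ∖ f⁻¹(0))/ℂ*, via the restriction of the quotient map V ∖ f⁻¹(0) → (V ∖ f⁻¹(0))/ℂ*. Consequently χ(X) = |I| · χ((V ∖ f⁻¹(0))/ℂ*). -/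
open Finset

variable (d : ℕ) (ι : Type) [Fintype ι] [DecidableEq ι]

/-- The complement of the zero locus of `f = ∏ᵢ lᵢ` in `V = ℂ^d`. -/
abbrev NonzeroLocus (l : ι → (EuclideanSpace ℂ (Fin d) →L[ℂ] ℂ)) : Type :=
  {v : EuclideanSpace ℂ (Fin d) // (∏ i, l i v) ≠ 0}

/-- The setoid on `V ∖ f⁻¹(0)` whose classes are the orbits of the scaling
`ℂ*`-action. -/
def scalingSetoid (l : ι → (EuclideanSpace ℂ (Fin d) →L[ℂ] ℂ)) :
    Setoid (NonzeroLocus d ι l) where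
  r a b := ∃ c : ℂˣ, (b : EuclideanSpace ℂ (Fin d)) = (c : ℂ) • (a : EuclideanSpace ℂ (Fin d))
  iseqv := by
    constructor
    · intro a; exact ⟨1, by simp⟩
    · rintro a b ⟨c, h⟩
      exact ⟨c⁻¹, by rw [h, smul_smul, Units.inv_mul, one_smul]⟩
    · rintro a b c ⟨u, hu⟩ ⟨w, hw⟩
      exact ⟨w * u, by rw [hw, hu, smul_smul, Units.val_mul]⟩

/-- The quotient `(V ∖ f⁻¹(0))/ℂ*`, with the quotient topology. -/
abbrev OrbitSpace (l : ι → (EuclideanSpace ℂ (Fin d) →L[ℂ] ℂ)) : Type :=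
  Quotient (scalingSetoid d ι l)

/-- The hypersurface `X = f⁻¹(1)`. -/
abbrev LevelOne (l : ι → (EuclideanSpace ℂ (Fin d) →L[ℂ] ℂ)) : Type :=
  {v : EuclideanSpace ℂ (Fin d) // (∏ i, l i v) = 1}

/-- The restriction to `X = f⁻¹(1)` of the quotient map `V ∖ f⁻¹(0) → (V ∖ f⁻¹(0))/ℂ*`. -/
def quotientOfLevelOne (l : ι → (EuclideanSpace ℂ (Fin d) →L[ℂ] ℂ)) :
    LevelOne d ι l → OrbitSpace d ι l :=
  fun x => Quotient.mk (scalingSetoid d ι l) ⟨x.1, by rw [x.2]; exact one_ne_zero⟩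

section AuxS12
open Topology

/-! ### Auxiliary constructions -/

noncomputable section S12

namespace S12

variable {d : ℕ} {ι : Type} [Fintype ι] [DecidableEq ι]
variable (l : ι → (EuclideanSpace ℂ (Fin d) →L[ℂ] ℂ))

/-- `f = ∏ᵢ lᵢ`. -/
def fl (v : EuclideanSpace ℂ (Fin d)) : ℂ := ∏ i, l i v

lemma continuous_fl : Continuous (fl l) :=
  continuous_finset_prod _ fun i _ => (l i).continuous

lemma fl_smul (c : ℂ) (v : EuclideanSpace ℂ (Fin d)) :
    fl l (c • v) = c ^ Fintype.card ι * fl l v := by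
  unfold fl
  simp only [map_smul, smul_eq_mul]
  rw [Finset.prod_mul_distrib, Finset.prod_const, Finset.card_univ]

lemma l_ne_zero (v : NonzeroLocus d ι l) (i : ι) : l i v.1 ≠ 0 :=
  fun h => v.2 (Finset.prod_eq_zero (Finset.mem_univ i) h)

lemma fl_ne_zero (v : NonzeroLocus d ι l) : fl l v.1 ≠ 0 := v.2

variable [Nonempty ι]

/-- A fixed index. -/
def i0 : ι := Classical.arbitrary ι

/-- The `ℂ*`-invariant function `g v = f v / (l i₀ v)^n`. -/
def g (v : NonzeroLocus d ι l) : ℂ :=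
  fl l v.1 / (l (i0 : ι) v.1) ^ Fintype.card ι

lemma g_ne_zero (v : NonzeroLocus d ι l) : g l v ≠ 0 :=
  div_ne_zero (fl_ne_zero l v) (pow_ne_zero _ (l_ne_zero l v _))

lemma g_invariant : ∀ a b : NonzeroLocus d ι l,
    (scalingSetoid d ι l).r a b → g l a = g l b := by
  rintro a b ⟨c, hc⟩
  have hc0 : (c : ℂ) ≠ 0 := c.ne_zero
  have ha : l (i0 : ι) a.1 ≠ 0 := l_ne_zero l a _
  unfold g
  rw [hc, fl_smul, map_smul, smul_eq_mul, mul_pow]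
  rw [mul_div_mul_left _ _ (pow_ne_zero _ hc0)]

lemma continuous_g : Continuous (g l) := by
  apply Continuous.div
  · exact (continuous_fl l).comp continuous_subtype_val
  · exact (((l (i0 : ι)).continuous).comp continuous_subtype_val).pow _
  · exact fun v => pow_ne_zero _ (l_ne_zero l v _)

/-- The descent of `g` to the orbit space. -/
def gbar : OrbitSpace d ι l → ℂ :=
  Quotient.lift (g l) (g_invariant l)

lemma continuous_gbar : Continuous (gbar l) :=
  (continuous_g l).quotient_lift _

lemma gbar_ne_zero (b : OrbitSpace d ι l) : gbar l b ≠ 0 := by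
  induction b using Quotient.ind with
  | _ v => exact g_ne_zero l v

/-- The quotient map. -/
def q : NonzeroLocus d ι l → OrbitSpace d ι l := Quotient.mk _

lemma hq : IsQuotientMap (q l) := isQuotientMap_quot_mk

/-- Scaling by a unit, as a self-map of the nonzero locus. -/
def scaleMap (c : ℂˣ) (v : NonzeroLocus d ι l) : NonzeroLocus d ι l :=
  ⟨(c : ℂ) • v.1, by
    show fl l ((c : ℂ) • v.1) ≠ 0
    rw [fl_smul]
    exact mul_ne_zero (pow_ne_zero _ c.ne_zero) v.2⟩

lemma continuous_scaleMap (c : ℂˣ) : Continuous (scaleMap l c) :=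
  Continuous.subtype_mk (f := fun v : NonzeroLocus d ι l => (c : ℂ) • v.1)
    (by fun_prop) _

lemma q_scaleMap (c : ℂˣ) (v : NonzeroLocus d ι l) :
    q l (scaleMap l c v) = q l v :=
  (Quotient.sound (⟨c, rfl⟩ : (scalingSetoid d ι l).r v (scaleMap l c v))).symm

lemma isOpenMap_q : IsOpenMap (q l) := by
  intro O hO
  rw [← (hq l).isOpen_preimage]
  have key : q l ⁻¹' (q l '' O) = ⋃ c : ℂˣ, scaleMap l c ⁻¹' O := by
    ext v
    simp only [Set.mem_preimage, Set.mem_image, Set.mem_iUnion]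
    constructor
    · rintro ⟨u, huO, hu⟩
      obtain ⟨c, hc⟩ := Quotient.exact hu
      refine ⟨c⁻¹, ?_⟩
      have : scaleMap l c⁻¹ v = u := by
        apply Subtype.ext
        show ((c⁻¹ : ℂˣ) : ℂ) • v.1 = u.1
        rw [hc, smul_smul, Units.inv_mul, one_smul]
      rwa [this]
    · rintro ⟨c, hc⟩
      exact ⟨scaleMap l c v, hc, q_scaleMap l c v⟩
  rw [key]
  exact isOpen_iUnion fun c => hO.preimage (continuous_scaleMap l c)

lemma continuousOn_lift {α : Type*} [TopologicalSpace α]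
    (h : NonzeroLocus d ι l → α)
    (hinv : ∀ a b : NonzeroLocus d ι l, (scalingSetoid d ι l).r a b → h a = h b)
    {U : Set (OrbitSpace d ι l)} (hU : IsOpen U)
    (hcont : ContinuousOn h (q l ⁻¹' U)) :
    ContinuousOn (Quotient.lift h hinv) U := by
  have hq' : IsQuotientMap (U.restrictPreimage (q l)) :=
    (((isOpenMap_q l).restrictPreimage U).isQuotientMap
      ((hq l).continuous.restrictPreimage)
      ((hq l).surjective.restrictPreimage U))
  rw [continuousOn_iff_continuous_restrict]
  rw [hq'.continuous_iff]
  rw [continuousOn_iff_continuous_restrict] at hcont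
  exact hcont


/-! ### Local branches of `n`-th roots -/

/-- The branch domain around `z₀`. -/
def W (z₀ : ℂ) : Set ℂ := {z | z₀ / z ∈ Complex.slitPlane}

lemma ne_zero_of_mem_W {z₀ z : ℂ} (h : z ∈ W z₀) : z ≠ 0 := by
  rintro rfl
  rw [W, Set.mem_setOf_eq, div_zero] at h
  exact Complex.zero_notMem_slitPlane h

lemma mem_W_self {z₀ : ℂ} (hz₀ : z₀ ≠ 0) : z₀ ∈ W z₀ := by
  show z₀ / z₀ ∈ Complex.slitPlane
  rw [div_self hz₀]
  exact Complex.one_mem_slitPlane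

lemma isOpen_W (z₀ : ℂ) : IsOpen (W z₀) := by
  have key : W z₀ = {z : ℂ | z ≠ 0} ∩ (fun z => z₀ / z) ⁻¹' Complex.slitPlane := by
    ext z
    exact ⟨fun h => ⟨ne_zero_of_mem_W h, h⟩, fun h => h.2⟩
  rw [key]
  exact ContinuousOn.isOpen_inter_preimage
    (continuousOn_const.div continuousOn_id fun z hz => hz) isOpen_ne
    Complex.isOpen_slitPlane

/-- A branch of `z ↦ z^{-1/n}` near `z₀`. -/
def rb (n : ℕ) (z₀ z : ℂ) : ℂ :=
  z₀⁻¹ ^ ((n : ℂ)⁻¹) * (z₀ / z) ^ ((n : ℂ)⁻¹)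

lemma rb_pow {n : ℕ} (hn : n ≠ 0) {z₀ z : ℂ} (hz₀ : z₀ ≠ 0) (hz : z ≠ 0) :
    rb n z₀ z ^ n = z⁻¹ := by
  unfold rb
  rw [mul_pow, Complex.cpow_nat_inv_pow _ hn, Complex.cpow_nat_inv_pow _ hn]
  field_simp

lemma rb_ne_zero {n : ℕ} (hn : n ≠ 0) {z₀ z : ℂ} (hz₀ : z₀ ≠ 0) (hz : z ≠ 0) :
    rb n z₀ z ≠ 0 := by
  intro h
  have h2 := rb_pow hn hz₀ hz
  rw [h, zero_pow hn] at h2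
  exact inv_ne_zero hz h2.symm

lemma continuousOn_rb (n : ℕ) (z₀ : ℂ) : ContinuousOn (rb n z₀) (W z₀) := by
  intro z hz
  apply ContinuousAt.continuousWithinAt
  have h1 : ContinuousAt (fun w : ℂ => w ^ ((n : ℂ)⁻¹)) (z₀ / z) :=
    continuousAt_cpow_const hz
  have h2 : ContinuousAt (fun w : ℂ => z₀ / w) z :=
    continuousAt_const.div continuousAt_id (ne_zero_of_mem_W hz)
  exact continuousAt_const.mul (h1.comp h2)

/-! ### The section map -/

/-- The canonical representative map: `Sv v` lies in the level set `f = 1`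
and in the orbit of `v`. -/
def Sv (z₀ : ℂ) (v : NonzeroLocus d ι l) : EuclideanSpace ℂ (Fin d) :=
  (rb (Fintype.card ι) z₀ (g l v) / l (i0 : ι) v.1) • v.1

lemma Sv_invariant (z₀ : ℂ) : ∀ a b : NonzeroLocus d ι l,
    (scalingSetoid d ι l).r a b → Sv l z₀ a = Sv l z₀ b := by
  rintro a b ⟨c, hc⟩
  have hg : g l b = g l a := (g_invariant l a b ⟨c, hc⟩).symm
  have hc0 : (c : ℂ) ≠ 0 := c.ne_zero
  have ha : l (i0 : ι) a.1 ≠ 0 := l_ne_zero l a _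
  unfold Sv
  rw [hc, map_smul, smul_eq_mul, smul_smul, hg]
  congr 1
  field_simp

lemma fl_Sv (hn : Fintype.card ι ≠ 0) {z₀ : ℂ} (hz₀ : z₀ ≠ 0)
    (v : NonzeroLocus d ι l) : fl l (Sv l z₀ v) = 1 := by
  have hg : g l v ≠ 0 := g_ne_zero l v
  have hrb := rb_pow hn hz₀ hg
  have hl : l (i0 : ι) v.1 ≠ 0 := l_ne_zero l v _
  have hf : fl l v.1 ≠ 0 := v.2
  unfold Sv
  rw [fl_smul, div_pow, hrb]
  rw [show g l v = fl l v.1 / (l (i0 : ι) v.1) ^ Fintype.card ι from rfl]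
  field_simp

/-- Descent of `Sv` to the orbit space. -/
def T0 (z₀ : ℂ) : OrbitSpace d ι l → EuclideanSpace ℂ (Fin d) :=
  Quotient.lift (Sv l z₀) (Sv_invariant l z₀)

lemma continuousOn_T0 (z₀ : ℂ) :
    ContinuousOn (T0 l z₀) (gbar l ⁻¹' W z₀) := by
  apply continuousOn_lift l (Sv l z₀) (Sv_invariant l z₀)
    ((isOpen_W z₀).preimage (continuous_gbar l))
  have hset : q l ⁻¹' (gbar l ⁻¹' W z₀) = g l ⁻¹' W z₀ := rfl
  rw [hset]
  apply ContinuousOn.smul (f := fun v : NonzeroLocus d ι l =>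
    rb (Fintype.card ι) z₀ (g l v) / l (i0 : ι) v.1) (g := fun v => v.1)
  · apply ContinuousOn.div
    · exact (continuousOn_rb (Fintype.card ι) z₀).comp
        (continuous_g l).continuousOn (fun v hv => hv)
    · exact (((l (i0 : ι)).continuous).comp continuous_subtype_val).continuousOn
    · exact fun v _ => l_ne_zero l v _
  · exact continuous_subtype_val.continuousOn


/-! ### The level set and the trivialization -/

/-- Inclusion of the level set into the nonzero locus. -/
def inclX (x : LevelOne d ι l) : NonzeroLocus d ι l :=
  ⟨x.1, by rw [x.2]; exact one_ne_zero⟩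

lemma continuous_p : Continuous (quotientOfLevelOne d ι l) := by
  show Continuous fun x => q l (inclX l x)
  exact (hq l).continuous.comp (Continuous.subtype_mk continuous_subtype_val _)

lemma gbar_p (x : LevelOne d ι l) :
    gbar l (quotientOfLevelOne d ι l x) = g l (inclX l x) := rfl

/-- The fiber coordinate of a point of the level set. -/
def Zval (z₀ : ℂ) (x : LevelOne d ι l) : ℂ :=
  l (i0 : ι) x.1 / rb (Fintype.card ι) z₀ (gbar l (quotientOfLevelOne d ι l x))

lemma Zval_pow (hn : Fintype.card ι ≠ 0) {z₀ : ℂ} (hz₀ : z₀ ≠ 0)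
    (x : LevelOne d ι l) : Zval l z₀ x ^ Fintype.card ι = 1 := by
  have hg : g l (inclX l x) ≠ 0 := g_ne_zero l _
  have hl : l (i0 : ι) x.1 ≠ 0 := l_ne_zero l (inclX l x) _
  unfold Zval
  rw [gbar_p, div_pow, rb_pow hn hz₀ hg]
  have hfx : fl l x.1 = 1 := x.2
  rw [show g l (inclX l x) = fl l x.1 / (l (i0 : ι) x.1) ^ Fintype.card ι from rfl,
    hfx]
  field_simp

lemma mem_levelOne_invFun (hn : Fintype.card ι ≠ 0) {z₀ : ℂ} (hz₀ : z₀ ≠ 0)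
    (ζ : ℂ) (hζ : ζ ^ Fintype.card ι = 1) (b : OrbitSpace d ι l) :
    (∏ i, l i (ζ • T0 l z₀ b)) = 1 := by
  induction b using Quotient.ind with
  | _ v =>
    show fl l (ζ • Sv l z₀ v) = 1
    rw [fl_smul, fl_Sv l hn hz₀ v, hζ, mul_one]

lemma ne_zero_of_pow_eq_one {n : ℕ} (hn : n ≠ 0) {ζ : ℂ} (hζ : ζ ^ n = 1) :
    ζ ≠ 0 := by
  intro h
  rw [h, zero_pow hn] at hζ
  exact zero_ne_one hζ

lemma p_invFun (hn : Fintype.card ι ≠ 0) {z₀ : ℂ} (hz₀ : z₀ ≠ 0) {ζ : ℂ}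
    (hζ : ζ ^ Fintype.card ι = 1) {b : OrbitSpace d ι l} (x : LevelOne d ι l)
    (hx : x.1 = ζ • T0 l z₀ b) : quotientOfLevelOne d ι l x = b := by
  revert hx
  induction b using Quotient.ind with
  | _ v =>
    intro hx
    have hζ0 : ζ ≠ 0 := ne_zero_of_pow_eq_one hn hζ
    have hrb : rb (Fintype.card ι) z₀ (g l v) ≠ 0 :=
      rb_ne_zero hn hz₀ (g_ne_zero l v)
    have hl : l (i0 : ι) v.1 ≠ 0 := l_ne_zero l v _
    show Quotient.mk (scalingSetoid d ι l) (inclX l x) = Quotient.mk _ v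
    refine (Quotient.sound (⟨Units.mk0
      (ζ * (rb (Fintype.card ι) z₀ (g l v) / l (i0 : ι) v.1))
      (mul_ne_zero hζ0 (div_ne_zero hrb hl)), ?_⟩ :
        (scalingSetoid d ι l).r v (inclX l x))).symm
    show x.1 = (ζ * (rb (Fintype.card ι) z₀ (g l v) / l (i0 : ι) v.1)) • v.1
    rw [hx, ← smul_smul]
    rfl

lemma Zval_invFun (hn : Fintype.card ι ≠ 0) {z₀ : ℂ} (hz₀ : z₀ ≠ 0) {ζ : ℂ}
    (hζ : ζ ^ Fintype.card ι = 1) {b : OrbitSpace d ι l} (x : LevelOne d ι l)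
    (hx : x.1 = ζ • T0 l z₀ b) : Zval l z₀ x = ζ := by
  have hpb : quotientOfLevelOne d ι l x = b := p_invFun l hn hz₀ hζ x hx
  unfold Zval
  rw [hpb]
  revert hx
  induction b using Quotient.ind with
  | _ v =>
    intro hx
    have hrb : rb (Fintype.card ι) z₀ (g l v) ≠ 0 :=
      rb_ne_zero hn hz₀ (g_ne_zero l v)
    have hl : l (i0 : ι) v.1 ≠ 0 := l_ne_zero l v _
    rw [show gbar l (Quotient.mk (scalingSetoid d ι l) v) = g l v from rfl, hx]
    have hT : T0 l z₀ (Quotient.mk (scalingSetoid d ι l) v) = Sv l z₀ v := rfl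
    rw [hT, show Sv l z₀ v
        = (rb (Fintype.card ι) z₀ (g l v) / l (i0 : ι) v.1) • v.1 from rfl]
    simp only [map_smul, smul_eq_mul]
    field_simp

/-- The local trivialization of `X → (V ∖ f⁻¹(0))/ℂ*` over the branch domain. -/
def triv (hn : Fintype.card ι ≠ 0) {z₀ : ℂ} (hz₀ : z₀ ≠ 0) :
    Bundle.Trivialization {ζ : ℂ // ζ ^ Fintype.card ι = 1} (quotientOfLevelOne d ι l) where
  toFun := fun x => (quotientOfLevelOne d ι l x, ⟨Zval l z₀ x, Zval_pow l hn hz₀ x⟩)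
  invFun := fun bz => ⟨(bz.2.1 : ℂ) • T0 l z₀ bz.1,
    mem_levelOne_invFun l hn hz₀ bz.2.1 bz.2.2 bz.1⟩
  source := quotientOfLevelOne d ι l ⁻¹' (gbar l ⁻¹' W z₀)
  target := (gbar l ⁻¹' W z₀) ×ˢ Set.univ
  map_source' := fun x hx => ⟨hx, trivial⟩
  map_target' := fun bz hbz => by
    rw [Set.mem_preimage, p_invFun l hn hz₀ bz.2.2 _ rfl]
    exact hbz.1
  left_inv' := fun x _ => by
    apply Subtype.ext
    show (Zval l z₀ x : ℂ) • T0 l z₀ (quotientOfLevelOne d ι l x) = x.1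
    have hT : T0 l z₀ (quotientOfLevelOne d ι l x) = Sv l z₀ (inclX l x) := rfl
    have hrb : rb (Fintype.card ι) z₀ (g l (inclX l x)) ≠ 0 :=
      rb_ne_zero hn hz₀ (g_ne_zero l _)
    have hl : l (i0 : ι) x.1 ≠ 0 := l_ne_zero l (inclX l x) _
    have hkey : Zval l z₀ x
        * (rb (Fintype.card ι) z₀ (g l (inclX l x)) / l (i0 : ι) x.1) = 1 := by
      unfold Zval
      rw [gbar_p]
      field_simp
    rw [hT, show Sv l z₀ (inclX l x)
        = (rb (Fintype.card ι) z₀ (g l (inclX l x)) / l (i0 : ι) x.1) • x.1 from rfl,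
      smul_smul, hkey, one_smul]
  right_inv' := fun bz _ => by
    exact Prod.ext (p_invFun l hn hz₀ bz.2.2 _ rfl)
      (Subtype.ext (Zval_invFun l hn hz₀ bz.2.2 _ rfl))
  open_source :=
    ((isOpen_W z₀).preimage (continuous_gbar l)).preimage (continuous_p l)
  open_target :=
    ((isOpen_W z₀).preimage (continuous_gbar l)).prod isOpen_univ
  continuousOn_toFun := by
    apply ContinuousOn.prodMk
    · exact (continuous_p l).continuousOn
    · rw [Topology.IsEmbedding.subtypeVal.continuousOn_iff]
      apply ContinuousOn.div
      · exact (((l (i0 : ι)).continuous).comp continuous_subtype_val).continuousOn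
      · exact (continuousOn_rb _ z₀).comp
          ((continuous_gbar l).comp (continuous_p l)).continuousOn (fun x hx => hx)
      · exact fun x hx => rb_ne_zero hn hz₀ (gbar_ne_zero l _)
  continuousOn_invFun := by
    rw [Topology.IsEmbedding.subtypeVal.continuousOn_iff]
    apply ContinuousOn.smul (f := fun bz : OrbitSpace d ι l × {ζ : ℂ // ζ ^ Fintype.card ι = 1} =>
      (bz.2.1 : ℂ)) (g := fun bz => T0 l z₀ bz.1)
    · exact (continuous_subtype_val.comp continuous_snd).continuousOn
    · exact (continuousOn_T0 l z₀).comp continuous_fst.continuousOn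
        (fun bz hbz => hbz.1)
  baseSet := gbar l ⁻¹' W z₀
  open_baseSet := (isOpen_W z₀).preimage (continuous_gbar l)
  source_eq := rfl
  target_eq := rfl
  proj_toFun := fun x _ => rfl

lemma finite_roots {n : ℕ} (hn : n ≠ 0) : Finite {ζ : ℂ // ζ ^ n = 1} := by
  have hfin : {ζ : ℂ | ζ ^ n = 1}.Finite :=
    Set.Finite.subset (Polynomial.nthRootsFinset n (1 : ℂ)).finite_toSet
      (fun ζ hζ => (Polynomial.mem_nthRootsFinset (Nat.pos_of_ne_zero hn) (1 : ℂ)).2 hζ)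
  exact hfin.to_subtype

lemma card_roots {n : ℕ} (hn : n ≠ 0) : Nat.card {ζ : ℂ // ζ ^ n = 1} = n := by
  have e : {ζ : ℂ // ζ ^ n = 1} ≃ (Polynomial.nthRootsFinset n (1 : ℂ)) :=
    Equiv.subtypeEquivRight fun ζ =>
      (Polynomial.mem_nthRootsFinset (Nat.pos_of_ne_zero hn) (1 : ℂ)).symm
  rw [Nat.card_congr e, Nat.card_eq_fintype_card, Fintype.card_coe,
    (Complex.isPrimitiveRoot_exp n hn).card_nthRootsFinset]

end S12

end S12


end AuxS12

/-- For a finite family of nonzero linear forms `lᵢ` on `ℂ^d` with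
trivial common kernel, `f = ∏ᵢ lᵢ` and `X = f⁻¹(1)`, the restriction of the quotient
map `V ∖ f⁻¹(0) → (V ∖ f⁻¹(0))/ℂ*` to `X` is a covering map all of whose fibers have
exactly `|I|` points (so `χ(X) = |I| · χ((V ∖ f⁻¹(0))/ℂ*)`). -/
theorem levelOne_covering_of_orbit_space [Nonempty ι]
    (l : ι → (EuclideanSpace ℂ (Fin d) →L[ℂ] ℂ))
    (hl : ∀ i, l i ≠ 0)
    (hker : ∀ v : EuclideanSpace ℂ (Fin d), (∀ i, l i v = 0) → v = 0) :
    IsCoveringMap (quotientOfLevelOne d ι l) ∧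
    ∀ b : OrbitSpace d ι l,
      Nat.card {x : LevelOne d ι l // quotientOfLevelOne d ι l x = b} =
        Fintype.card ι := by

  have hn : Fintype.card ι ≠ 0 := Fintype.card_ne_zero
  haveI : Finite {ζ : ℂ // ζ ^ Fintype.card ι = 1} := S12.finite_roots hn
  have key : ∀ b : OrbitSpace d ι l,
      ∃ t : Bundle.Trivialization {ζ : ℂ // ζ ^ Fintype.card ι = 1}
        (quotientOfLevelOne d ι l), b ∈ t.baseSet := fun b =>
    ⟨S12.triv l hn (S12.gbar_ne_zero l b), S12.mem_W_self (S12.gbar_ne_zero l b)⟩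
  refine ⟨IsFiberBundle.isCoveringMap key, fun b => ?_⟩
  obtain ⟨t, hb⟩ := key b
  have e1 : {x : LevelOne d ι l // quotientOfLevelOne d ι l x = b}
      ≃ (quotientOfLevelOne d ι l ⁻¹' {b} : Set _) :=
    Equiv.subtypeEquivRight fun x => by simp
  rw [Nat.card_congr (e1.trans (t.preimageSingletonHomeomorph hb).toEquiv)]
  exact S12.card_roots hn
end
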